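/- Let (A,B,I,J) be a stable ADHM datum of numerical type (1,c), i.e., dim W = 1. Then J = 0, provided [A,B] + IJ = 0. -/

import Mathlib

open LinearMap Module

section ADHMAux

variable {V W : Type*} [AddCommGroup V] [Module ℂ V] [FiniteDimensional ℂ V]
  [AddCommGroup W] [Module ℂ W] [FiniteDimensional ℂ W]

/-- The endomorphism of `V` given by a word in the letters `A` (coded `false`) and
`B` (coded `true`). -/
noncomputable def adhmWord (A B : V →ₗ[ℂ] V) : List Bool → Module.End ℂ V
  | [] => 1
  | (x :: w) => (if x then B else A) * adhmWord A B w

@[simp] lemma adhmWord_nil (A B : V →ₗ[ℂ] V) : adhmWord A B [] = 1 := rfl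

@[simp] lemma adhmWord_cons (A B : V →ₗ[ℂ] V) (x : Bool) (w : List Bool) :
    adhmWord A B (x :: w) = (if x then B else A) * adhmWord A B w := rfl

lemma adhmWord_append (A B : V →ₗ[ℂ] V) (u v : List Bool) :
    adhmWord A B (u ++ v) = adhmWord A B u * adhmWord A B v := by
  induction u with
  | nil => simp
  | cons x u ih => simp [ih, mul_assoc]

/-- The scalar-valued "correlation" `J ∘ w(A,B) ∘ I`. -/
noncomputable def adhmT (A B : V →ₗ[ℂ] V) (I : W →ₗ[ℂ] V) (J : V →ₗ[ℂ] W)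
    (w : List Bool) : W →ₗ[ℂ] W :=
  J ∘ₗ adhmWord A B w ∘ₗ I

lemma count_false_add_count_true (w : List Bool) :
    w.count false + w.count true = w.length := by
  induction w with
  | nil => simp
  | cons x w ih =>
    cases x <;> simp [List.count_cons] <;> omega

lemma end_of_trace_eq_zero (hW : Module.finrank ℂ W = 1) (f : W →ₗ[ℂ] W)
    (h : trace ℂ W f = 0) : f = 0 := by
  let b := Module.finBasisOfFinrankEq ℂ W hW
  have htr := trace_eq_matrix_trace ℂ b f
  rw [h] at htr
  have h00 : (LinearMap.toMatrix b b f) 0 0 = 0 := by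
    have h2 : Matrix.trace (LinearMap.toMatrix b b f) = (LinearMap.toMatrix b b f) 0 0 := by
      simp [Matrix.trace, Fin.sum_univ_one]
    rw [h2] at htr
    exact htr.symm
  apply (LinearMap.toMatrix b b).injective
  rw [map_zero]
  ext i j
  fin_cases i; fin_cases j
  simpa using h00

section swap

variable (A B : V →ₗ[ℂ] V) (I : W →ₗ[ℂ] V) (J : V →ₗ[ℂ] W)
variable (hIJ : (I ∘ₗ J : V →ₗ[ℂ] V) = B ∘ₗ A - A ∘ₗ B)

include hIJ

lemma adhmWord_swap_diff (u v : List Bool) :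
    adhmWord A B (u ++ true :: false :: v) - adhmWord A B (u ++ false :: true :: v)
      = adhmWord A B u * ((I ∘ₗ J) * adhmWord A B v) := by
  have hIJ' : (I ∘ₗ J : Module.End ℂ V) = B * A - A * B := hIJ
  rw [hIJ']
  simp only [adhmWord_append, adhmWord_cons, if_true, if_false]
  noncomm_ring

lemma adhmT_swap (u v : List Bool) :
    adhmT A B I J (u ++ true :: false :: v)
      = adhmT A B I J (u ++ false :: true :: v)
        + (adhmT A B I J u) ∘ₗ (adhmT A B I J v) := by
  have h := adhmWord_swap_diff A B I J hIJ u v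
  have h2 : adhmWord A B (u ++ true :: false :: v)
      = adhmWord A B (u ++ false :: true :: v)
        + adhmWord A B u * ((I ∘ₗ J) * adhmWord A B v) := by
    rw [← h]; abel
  unfold adhmT
  rw [h2]
  ext x
  simp [Module.End.mul_apply, LinearMap.add_apply, LinearMap.comp_apply]

lemma adhmTrace_swap (u v : List Bool) :
    trace ℂ V (adhmWord A B (u ++ true :: false :: v))
      - trace ℂ V (adhmWord A B (u ++ false :: true :: v))
      = trace ℂ W (adhmT A B I J (v ++ u)) := by
  have h := adhmWord_swap_diff A B I J hIJ u v
  have h1 : trace ℂ V (adhmWord A B (u ++ true :: false :: v))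
      - trace ℂ V (adhmWord A B (u ++ false :: true :: v))
      = trace ℂ V (adhmWord A B u * ((I ∘ₗ J) * adhmWord A B v)) := by
    rw [← map_sub, h]
  rw [h1]
  have h2 : trace ℂ V (adhmWord A B u * ((I ∘ₗ J) * adhmWord A B v))
      = trace ℂ V ((I ∘ₗ J) * (adhmWord A B v * adhmWord A B u)) := by
    rw [trace_mul_comm, mul_assoc]
  rw [h2, ← adhmWord_append]
  have h3 : ((I ∘ₗ J) * adhmWord A B (v ++ u) : Module.End ℂ V)
      = I ∘ₗ (J ∘ₗ adhmWord A B (v ++ u)) := by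
    ext x; simp [Module.End.mul_apply, LinearMap.comp_apply]
  rw [h3, trace_comp_comm']
  rfl

end swap

end ADHMAux

/-- For a stable ADHM datum of numerical type `(1,c)` (i.e. `dim W = 1`) satisfying
`[A,B] + IJ = 0`, one has `J = 0`. -/
theorem J_eq_zero_of_rank_one
    {V W : Type*} [AddCommGroup V] [Module ℂ V] [FiniteDimensional ℂ V]
    [AddCommGroup W] [Module ℂ W] [FiniteDimensional ℂ W]
    (hW : Module.finrank ℂ W = 1)
    (A B : V →ₗ[ℂ] V) (I : W →ₗ[ℂ] V) (J : V →ₗ[ℂ] W)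
    (hADHM : A ∘ₗ B - B ∘ₗ A + I ∘ₗ J = 0)
    (hstab : ∀ S : Submodule ℂ V, (∀ x ∈ S, A x ∈ S) → (∀ x ∈ S, B x ∈ S) →
      LinearMap.range I ≤ S → S = ⊤) :
    J = 0 := by
  classical
  have hIJ : (I ∘ₗ J : V →ₗ[ℂ] V) = B ∘ₗ A - A ∘ₗ B := by
    have h := neg_eq_of_add_eq_zero_right hADHM
    rw [← h, neg_sub]
  -- Main claim: all correlation functions vanish.
  have main : ∀ n (w : List Bool), w.length = n → adhmT A B I J w = 0 := by
    intro n
    induction n using Nat.strong_induction_on with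
    | _ n IH =>
      -- Invariance of `adhmT` under permutations at length `n`, given IH.
      have hperm : ∀ (l₁ l₂ : List Bool), l₁.Perm l₂ → ∀ p : List Bool,
          (p ++ l₁).length = n → adhmT A B I J (p ++ l₁) = adhmT A B I J (p ++ l₂) := by
        intro l₁ l₂ hp
        induction hp with
        | nil => intro p _; rfl
        | @cons x l₁' l₂' h ih =>
          intro p hp
          have e1 : p ++ x :: l₁' = (p ++ [x]) ++ l₁' := by simp
          have e2 : p ++ x :: l₂' = (p ++ [x]) ++ l₂' := by simp
          rw [e1, e2]
          exact ih (p ++ [x]) (e1 ▸ hp)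
        | swap x y l =>
          intro p hp
          have hl : adhmT A B I J l = 0 := by
            apply IH l.length _ l rfl
            simp at hp; omega
          match x, y with
          | false, false => rfl
          | true, true => rfl
          | false, true =>
            -- goal: T (p ++ false :: true :: l) = T (p ++ true :: false :: l)
            rw [adhmT_swap A B I J hIJ p l, hl, comp_zero, add_zero]
          | true, false =>
            rw [adhmT_swap A B I J hIJ p l, hl, comp_zero, add_zero]
        | trans h₁ h₂ ih₁ ih₂ =>
          intro p hp
          rw [ih₁ p hp, ih₂ p (by rw [List.length_append, ← h₁.length_eq,
            ← List.length_append]; exact hp)]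
      intro w hw
      set α := w.count false with hα
      set β := w.count true with hβ
      have hαβ : α + β = n := by rw [hα, hβ, count_false_add_count_true, hw]
      set c : List Bool := List.replicate α false ++ List.replicate β true with hc
      have hwc : w.Perm c := by
        rw [List.perm_iff_count]
        intro x
        cases x <;> simp [hc, List.count_append, List.count_replicate] <;> rfl
      have hclen : c.length = n := by simp [hc]; omega
      have hTwc : adhmT A B I J w = adhmT A B I J c := by
        have := hperm w c hwc []
        simpa using this (by simpa using hw)
      set t : ℂ := trace ℂ W (adhmT A B I J c) with ht
      -- the chain of words A^α B^k A B^(β+1-k)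
      have chain : ∀ k, k ≤ β →
          trace ℂ V (adhmWord A B (List.replicate α false ++ List.replicate k true
            ++ false :: List.replicate (β + 1 - k) true))
          = trace ℂ V (adhmWord A B (List.replicate (α + 1) false
            ++ List.replicate (β + 1) true)) + (k : ℂ) * t := by
        intro k hk
        induction k with
        | zero =>
          have hlist : List.replicate α false ++ List.replicate 0 true
              ++ false :: List.replicate (β + 1 - 0) true
              = List.replicate (α + 1) false ++ List.replicate (β + 1) true := by
            simp [List.replicate_succ' (n := α) (a := false), List.append_assoc]
          rw [hlist]; push_cast; ring
        | succ k ihk =>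
          have hk' : k ≤ β := Nat.le_of_succ_le hk
          have hlist : List.replicate α false ++ List.replicate (k + 1) true
              ++ false :: List.replicate (β + 1 - (k + 1)) true
              = (List.replicate α false ++ List.replicate k true)
                ++ true :: false :: List.replicate (β - k) true := by
            rw [List.replicate_succ' (n := k) (a := true)]
            have : β + 1 - (k + 1) = β - k := by omega
            rw [this]
            simp [List.append_assoc]
          rw [hlist]
          have hswap := adhmTrace_swap A B I J hIJ
            (List.replicate α false ++ List.replicate k true) (List.replicate (β - k) true)
          have hmid : (List.replicate α false ++ List.replicate k true)
              ++ false :: true :: List.replicate (β - k) true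
              = List.replicate α false ++ List.replicate k true
                ++ false :: List.replicate (β + 1 - k) true := by
            have : β + 1 - k = (β - k) + 1 := by omega
            rw [this, List.replicate_succ]
          rw [hmid] at hswap
          -- the closed-up word is a permutation of c
          have hclose : adhmT A B I J (List.replicate (β - k) true
              ++ (List.replicate α false ++ List.replicate k true)) = adhmT A B I J c := by
            have hpm : (List.replicate (β - k) true
                ++ (List.replicate α false ++ List.replicate k true)).Perm c := by
              rw [List.perm_iff_count]
              intro x
              cases x <;> simp [hc, List.count_append, List.count_replicate] <;> omega
            have := hperm _ c hpm []
            simpa using this (by simp; omega)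
          rw [hclose] at hswap
          have : trace ℂ V (adhmWord A B ((List.replicate α false ++ List.replicate k true)
              ++ true :: false :: List.replicate (β - k) true))
              = trace ℂ V (adhmWord A B (List.replicate α false ++ List.replicate k true
                ++ false :: List.replicate (β + 1 - k) true)) + t := by
            rw [← ht] at hswap
            linear_combination hswap
          rw [this, ihk hk']
          push_cast; ring
      -- compute t = tr(w₀) - tr(w_β)
      have hre : t = trace ℂ V ((B * A - A * B : Module.End ℂ V) * adhmWord A B c) := by
        rw [ht]
        unfold adhmT
        have h1 : (J ∘ₗ adhmWord A B c ∘ₗ I) = (J ∘ₗ adhmWord A B c) ∘ₗ I := by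
          rw [LinearMap.comp_assoc]
        rw [h1, ← trace_comp_comm']
        congr 1
        have hIJ' : (I ∘ₗ J : Module.End ℂ V) = B * A - A * B := hIJ
        rw [← hIJ']
        ext x; simp [Module.End.mul_apply, LinearMap.comp_apply]
      have hw0 : trace ℂ V ((B * A : Module.End ℂ V) * adhmWord A B c)
          = trace ℂ V (adhmWord A B (List.replicate (α + 1) false
            ++ List.replicate (β + 1) true)) := by
        have hlist : List.replicate (α + 1) false ++ List.replicate (β + 1) true
            = false :: (c ++ [true]) := by
          rw [List.replicate_succ, List.replicate_succ', hc]
          simp [List.append_assoc]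
        rw [hlist]
        have h4 : adhmWord A B (false :: (c ++ [true])) = A * (adhmWord A B c * B) := by
          simp [adhmWord_append, mul_assoc]
        rw [h4]
        calc trace ℂ V ((B * A : Module.End ℂ V) * adhmWord A B c)
            = trace ℂ V (B * (A * adhmWord A B c)) := by rw [mul_assoc]
          _ = trace ℂ V ((A * adhmWord A B c) * B) := by rw [trace_mul_comm]
          _ = trace ℂ V (A * (adhmWord A B c * B)) := by rw [mul_assoc]
      have hwβ : trace ℂ V ((A * B : Module.End ℂ V) * adhmWord A B c)
          = trace ℂ V (adhmWord A B (List.replicate α false ++ List.replicate β true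
            ++ false :: List.replicate (β + 1 - β) true)) := by
        have hlist : List.replicate α false ++ List.replicate β true
            ++ false :: List.replicate (β + 1 - β) true = c ++ [false, true] := by
          have : β + 1 - β = 1 := by omega
          rw [this]
          simp [hc, List.append_assoc]
        have h5 : adhmWord A B [false, true] = A * B := by
          simp [adhmWord]
        rw [hlist, adhmWord_append A B c [false, true], h5, trace_mul_comm]
      have hchainβ := chain β le_rfl
      have hteq : t = -(β : ℂ) * t := by
        have h1 : t = trace ℂ V ((B * A : Module.End ℂ V) * adhmWord A B c)
            - trace ℂ V ((A * B : Module.End ℂ V) * adhmWord A B c) := by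
          rw [hre, sub_mul, map_sub]
        linear_combination h1 + hw0 - hwβ - hchainβ
      have ht0 : t = 0 := by
        have h2 : ((β : ℂ) + 1) * t = 0 := by linear_combination hteq
        have h3 : ((β : ℂ) + 1) ≠ 0 := Nat.cast_add_one_ne_zero β
        exact (mul_eq_zero.mp h2).resolve_left h3
      have hTc : adhmT A B I J c = 0 :=
        end_of_trace_eq_zero hW _ (by rw [← ht, ht0])
      rw [hTwc, hTc]
  -- Build the invariant subspace.
  let S : Submodule ℂ V :=
    { carrier := {v | ∀ w : List Bool, J (adhmWord A B w v) = 0}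
      add_mem' := by
        intro a b ha hb w
        rw [map_add, map_add, ha w, hb w, add_zero]
      zero_mem' := by
        intro w
        rw [map_zero, map_zero]
      smul_mem' := by
        intro r a ha w
        rw [map_smul, map_smul, ha w, smul_zero] }
  have hmemS : ∀ v, v ∈ S ↔ ∀ w : List Bool, J (adhmWord A B w v) = 0 := fun _ => Iff.rfl
  have hSA : ∀ x ∈ S, A x ∈ S := by
    intro x hx w
    have h1 : adhmWord A B w (A x) = adhmWord A B (w ++ [false]) x := by
      rw [adhmWord_append]
      simp [Module.End.mul_apply]
    rw [h1]
    exact hx (w ++ [false])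
  have hSB : ∀ x ∈ S, B x ∈ S := by
    intro x hx w
    have h1 : adhmWord A B w (B x) = adhmWord A B (w ++ [true]) x := by
      rw [adhmWord_append]
      simp [Module.End.mul_apply]
    rw [h1]
    exact hx (w ++ [true])
  have hSI : LinearMap.range I ≤ S := by
    rintro _ ⟨x, rfl⟩
    intro w
    have := main w.length w rfl
    have h2 := LinearMap.congr_fun this x
    simpa [adhmT, LinearMap.comp_apply] using h2
  have hS : S = ⊤ := hstab S hSA hSB hSI
  ext v
  have hv : v ∈ S := hS ▸ Submodule.mem_top
  have := hv []
  simpa using this
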